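/- Let (R,m) be a Noetherian local ring and P a prime ideal of R generated by a regular sequence. Then P^(2) ⊆ m·P, where P^(2) is the second symbolic power of P. -/

import Mathlib

open RingTheory.Sequence

section aux

variable {R : Type*} [CommRing R]

/-- Every element of `J * span L` is a combination `∑ cᵢ Lᵢ` with `cᵢ ∈ J`. -/
lemma aux_repr (L : List R) (J : Ideal R) :
    ∀ y ∈ J * Ideal.ofList L, ∃ c : List R, c.length = L.length ∧
      (∀ z ∈ c, z ∈ J) ∧ (List.zipWith (· * ·) c L).sum = y := by
  induction L with
  | nil =>
    intro y hy
    rw [Ideal.ofList_nil, Ideal.mul_bot, Ideal.mem_bot] at hy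
    exact ⟨[], rfl, by simp, by simp [hy]⟩
  | cons r L ih =>
    intro y hy
    rw [Ideal.ofList_cons, Ideal.mul_sup] at hy
    obtain ⟨y₁, hy₁, y₂, hy₂, rfl⟩ := Submodule.mem_sup.mp hy
    obtain ⟨a, haJ, har⟩ := Ideal.mem_mul_span_singleton.mp hy₁
    obtain ⟨c, hc1, hc2, hc3⟩ := ih y₂ hy₂
    refine ⟨a :: c, by simp [hc1], ?_, ?_⟩
    · intro z hz
      rcases List.mem_cons.mp hz with rfl | hz
      · exact haJ
      · exact hc2 z hz
    · simp [hc3, har]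

/-- A combination of elements of `J` and `K` lies in `J * K`. -/
lemma aux_mem_mul (c L : List R) (J K : Ideal R)
    (hc : ∀ z ∈ c, z ∈ J) (hL : ∀ z ∈ L, z ∈ K) :
    (List.zipWith (· * ·) c L).sum ∈ J * K := by
  induction c generalizing L with
  | nil => simpa using Submodule.zero_mem _
  | cons a c ih =>
    cases L with
    | nil => simpa using Submodule.zero_mem _
    | cons r L =>
      simp only [List.zipWith_cons_cons, List.sum_cons]
      exact add_mem (Ideal.mul_mem_mul (hc a (by simp)) (hL r (by simp)))
        (ih L (fun z hz => hc z (by simp [hz])) (fun z hz => hL z (by simp [hz])))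

lemma aux_sum_add (b d L : List R) (r : R) (hb : b.length = L.length)
    (hd : d.length = L.length) :
    (List.zipWith (· * ·) (List.zipWith (fun x y => x + y * r) b d) L).sum
      = (List.zipWith (· * ·) b L).sum + r * (List.zipWith (· * ·) d L).sum := by
  induction b generalizing d L with
  | nil =>
    cases L with
    | nil => simp
    | cons => simp at hb
  | cons x b ih =>
    cases L with
    | nil => simp at hb
    | cons f L =>
      cases d with
      | nil => simp at hd
      | cons y d =>
        simp only [List.zipWith_cons_cons, List.sum_cons,
          ih d L (by simpa using hb) (by simpa using hd)]
        ring

lemma aux_sum_mul_right (a L : List R) (s : R) :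
    (List.zipWith (· * ·) (a.map (· * s)) L).sum
      = (List.zipWith (· * ·) a L).sum * s := by
  induction a generalizing L with
  | nil => simp
  | cons x a ih =>
    cases L with
    | nil => simp
    | cons f L =>
      simp only [List.map_cons, List.zipWith_cons_cons, List.sum_cons, ih L]
      ring

lemma aux_smul_top (I : Ideal R) : (I • (⊤ : Submodule R R) : Submodule R R) = I := by
  rw [smul_eq_mul, Ideal.mul_top]

lemma aux_cancel {L : List R} {r : R}
    (hr : IsSMulRegular (R ⧸ (Ideal.ofList L • ⊤ : Submodule R R)) r)
    {x : R} (hx : x * r ∈ Ideal.ofList L) : x ∈ Ideal.ofList L := by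
  have h0 : r • (Submodule.Quotient.mk x :
      R ⧸ (Ideal.ofList L • ⊤ : Submodule R R)) = 0 := by
    rw [← Submodule.Quotient.mk_smul, Submodule.Quotient.mk_eq_zero, aux_smul_top,
      smul_eq_mul, mul_comm]
    exact hx
  have := hr (show r • (Submodule.Quotient.mk x :
      R ⧸ (Ideal.ofList L • ⊤ : Submodule R R)) = r • 0 by rw [smul_zero]; exact h0)
  rw [Submodule.Quotient.mk_eq_zero, aux_smul_top] at this
  exact this

/-- Relations on a weakly regular sequence lie in the generated ideal. -/
lemma aux_rels : ∀ (n : ℕ) (L : List R), L.length = n → IsWeaklyRegular R L →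
    ∀ b : List R, b.length = L.length → (List.zipWith (· * ·) b L).sum = 0 →
    ∀ z ∈ b, z ∈ Ideal.ofList L := by
  intro n
  induction n with
  | zero =>
    intro L hL _ b hb _ z hz
    rw [List.length_eq_zero_iff] at hL
    subst hL
    rw [List.length_eq_zero_iff.mp hb] at hz
    simp at hz
  | succ n ih =>
    intro L hLn hreg b hb hsum z hz
    rcases L.eq_nil_or_concat with rfl | ⟨L', r, rfl⟩
    · simp at hLn
    rcases b.eq_nil_or_concat with rfl | ⟨b', c, rfl⟩
    · rw [List.length_nil, List.length_concat] at hb; omega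
    simp only [List.concat_eq_append] at hreg hsum hb hLn hz ⊢
    have hlen : b'.length = L'.length := by simpa using hb
    have hLn' : L'.length = n := by simpa using hLn
    rw [isWeaklyRegular_append_iff] at hreg
    obtain ⟨h1, h2⟩ := hreg
    rw [isWeaklyRegular_singleton_iff] at h2
    -- split the sum
    rw [List.zipWith_append hlen, List.sum_append] at hsum
    simp only [List.zipWith_cons_cons, List.zipWith_nil_right, List.sum_cons,
      List.sum_nil, add_zero] at hsum
    have hS : (List.zipWith (· * ·) b' L').sum ∈ Ideal.ofList L' := by
      have := aux_mem_mul b' L' ⊤ (Ideal.ofList L') (by simp)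
        (fun z hz => Ideal.subset_span hz)
      rwa [Ideal.top_mul] at this
    have hcr : c * r ∈ Ideal.ofList L' := by
      have h : c * r = -(List.zipWith (· * ·) b' L').sum := by
        linear_combination hsum
      rw [h]; exact neg_mem hS
    have hc : c ∈ Ideal.ofList L' := aux_cancel h2 hcr
    have hle : Ideal.ofList L' ≤ Ideal.ofList (L' ++ [r]) := by
      apply Ideal.span_mono; intro z hz; simp_all
    have hrmem : r ∈ Ideal.ofList (L' ++ [r]) := Ideal.subset_span (by simp)
    rcases List.mem_append.mp hz with hz' | hz'
    · -- z ∈ b'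
      obtain ⟨d, hd1, _, hd3⟩ := aux_repr L' ⊤ c (by rw [Ideal.top_mul]; exact hc)
      set b'' := List.zipWith (fun x y => x + y * r) b' d with hb''
      have hb''len : b''.length = L'.length := by
        simp [hb'', hlen, hd1]
      have hb''sum : (List.zipWith (· * ·) b'' L').sum = 0 := by
        rw [hb'', aux_sum_add b' d L' r hlen hd1, hd3]
        linear_combination hsum
      have hmem := ih L' hLn' h1 b'' hb''len hb''sum
      obtain ⟨i, hi, rfl⟩ := List.getElem_of_mem hz'
      have hib : i < b''.length := by omega
      have hid : i < d.length := by omega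
      have hbi : b''[i] = b'[i] + d[i] * r := by
        simp [hb'', List.getElem_zipWith]
      have h1m : b''[i] ∈ Ideal.ofList (L' ++ [r]) :=
        hle (hmem _ (List.getElem_mem hib))
      have : b'[i] = b''[i] - d[i] * r := by rw [hbi]; ring
      rw [this]
      exact sub_mem h1m (Ideal.mul_mem_left _ _ hrmem)
    · -- z = c
      simp only [List.mem_singleton] at hz'
      subst hz'
      exact hle hc

/-- Quasi-regularity in degree 1. -/
lemma aux_quasireg (L : List R) (hreg : IsWeaklyRegular R L)
    (b : List R) (hb : b.length = L.length)
    (hsum : (List.zipWith (· * ·) b L).sum ∈ (Ideal.ofList L) ^ 2) :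
    ∀ z ∈ b, z ∈ Ideal.ofList L := by
  rw [sq] at hsum
  obtain ⟨cs, hc1, hc2, hc3⟩ := aux_repr L (Ideal.ofList L) _ hsum
  set r : R := -1 with hr
  set b'' := List.zipWith (fun x y => x + y * r) b cs with hb''
  have hb''len : b''.length = L.length := by simp [hb'', hb, hc1]
  have hb''sum : (List.zipWith (· * ·) b'' L).sum = 0 := by
    rw [hb'', aux_sum_add b cs L r hb hc1, hc3, hr]
    ring
  have hmem := aux_rels L.length L rfl hreg b'' hb''len hb''sum
  intro z hz
  obtain ⟨i, hi, rfl⟩ := List.getElem_of_mem hz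
  have hib : i < b''.length := by omega
  have hic : i < cs.length := by omega
  have hbi : b''[i] = b[i] + cs[i] * r := by simp [hb'', List.getElem_zipWith]
  have h1m : b''[i] ∈ Ideal.ofList L := hmem _ (List.getElem_mem hib)
  have heq : b[i] = b''[i] + cs[i] := by rw [hbi, hr]; ring
  rw [heq]
  exact add_mem h1m (hc2 _ (List.getElem_mem hic))

end aux

/-- In a Noetherian local ring `(R,m)`, if the prime ideal `P` is
generated by a regular sequence then `P⁽²⁾ ⊆ m·P`. -/
theorem stmt19 (R : Type*) [CommRing R] [IsNoetherianRing R] [IsLocalRing R]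
    (P : Ideal R) (hP : P.IsPrime)
    (L : List R) (hreg : RingTheory.Sequence.IsRegular R L) (hgen : P = Ideal.span {x | x ∈ L}) :
    ∀ x : R, (∃ s ∉ P, x * s ∈ P ^ 2) → x ∈ IsLocalRing.maximalIdeal R * P := by
  intro x ⟨s, hs, hxs⟩
  have hPof : P = Ideal.ofList L := hgen
  have hPle : P ≤ IsLocalRing.maximalIdeal R := IsLocalRing.le_maximalIdeal hP.ne_top
  have hxP : x ∈ P := by
    have : x * s ∈ P := Ideal.pow_le_self two_ne_zero hxs
    rcases hP.mem_or_mem this with h | h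
    · exact h
    · exact absurd h hs
  -- write x as a combination of the generators
  obtain ⟨a, ha1, _, ha3⟩ := aux_repr L ⊤ x (by rw [Ideal.top_mul, ← hPof]; exact hxP)
  -- coefficients of x * s
  have hlen : (a.map (· * s)).length = L.length := by simp [ha1]
  have hsum : (List.zipWith (· * ·) (a.map (· * s)) L).sum ∈ (Ideal.ofList L) ^ 2 := by
    rw [aux_sum_mul_right, ha3, ← hPof]
    exact hxs
  have hkey := aux_quasireg L hreg.toIsWeaklyRegular _ hlen hsum
  have haP : ∀ w ∈ a, w ∈ P := by
    intro w hw
    have : w * s ∈ Ideal.ofList L := hkey _ (List.mem_map_of_mem hw)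
    rw [← hPof] at this
    rcases hP.mem_or_mem this with h | h
    · exact h
    · exact absurd h hs
  rw [← ha3]
  exact aux_mem_mul a L _ P (fun z hz => hPle (haP z hz))
    (fun z hz => hPof ▸ Ideal.subset_span hz)
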